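/- Let n ≥ 1 be an integer and let b_1 > b_2 > ⋯ > b_n be real numbers. Then, as (x_1, …, x_n) and (y_1, …, y_n) tend to (0, …, 0) along tuples satisfying x_1 > x_2 > ⋯ > x_n and y_1 > y_2 > ⋯ > y_n, the quotient det((p_1(x_i, b_j))_{i,j=1}^{n}) · det((p_1(b_i, y_j))_{i,j=1}^{n}) / det((p_2(x_i, y_j))_{i,j=1}^{n}) converges to (2^{n(n−1)/2} / (π^{n/2} ∏_{j=1}^{n−1} j!)) · ∏_{1 ≤ i < j ≤ n} (b_i − b_j)² · ∏_{j=1}^{n} e^{−b_j²}, which is the eigenvalue density of the n×n Gaussian unitary ensemble evaluated at (b_1, …, b_n). -/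

import Mathlib

open Filter Finset

/-- The one-dimensional heat kernel `p_t(a,b)`. -/
noncomputable def heatK (t a b : ℝ) : ℝ :=
    (Real.sqrt (2 * Real.pi * t))⁻¹ * Real.exp (-(a - b) ^ 2 / (2 * t))

noncomputable section

/-- Complete homogeneous symmetric polynomial `h_m(x 0, …, x (k-1))`. -/
def hh : ℕ → ℕ → (ℕ → ℝ) → ℝ
  | _, 0, _ => 1
  | 0, _+1, _ => 0
  | k+1, m+1, x => hh k (m+1) x + x k * hh (k+1) m x
termination_by k m _ => (k, m)

@[simp] lemma hh_zero (k : ℕ) (x : ℕ → ℝ) : hh k 0 x = 1 := by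
  cases k <;> rw [hh]

@[simp] lemma hh_nil (m : ℕ) (x : ℕ → ℝ) : hh 0 (m+1) x = 0 := by rw [hh]

lemma hh_succ (k m : ℕ) (x : ℕ → ℝ) :
    hh (k+1) (m+1) x = hh k (m+1) x + x k * hh (k+1) m x := by
  rw [hh]

lemma hh_at_zero (k m : ℕ) : hh k (m+1) (fun _ => 0) = 0 := by
  induction k with
  | zero => rw [hh]
  | succ k ih =>
    rw [hh_succ, ih]
    simp

lemma hh_continuous (k m : ℕ) : Continuous fun x : ℕ → ℝ => hh k m x := by
  induction k generalizing m with
  | zero =>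
    cases m with
    | zero => simpa using continuous_const
    | succ m => simpa using continuous_const
  | succ k ihk =>
    induction m with
    | zero => simpa using continuous_const
    | succ m ihm =>
      have : (fun x : ℕ → ℝ => hh (k+1) (m+1) x)
          = fun x => hh k (m+1) x + x k * hh (k+1) m x := by
        funext x; rw [hh_succ]
      rw [this]
      exact (ihk (m+1)).add ((continuous_apply k).mul ihm)

lemma hh_bound (k m : ℕ) (x : ℕ → ℝ) (r : ℝ) (hr : 0 ≤ r)
    (hx : ∀ i, i < k → |x i| ≤ r) : |hh k m x| ≤ 2 ^ k * (2*r) ^ m := by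
  induction k generalizing m with
  | zero =>
    cases m with
    | zero => simp
    | succ m =>
      simp only [hh_nil, abs_zero]
      positivity
  | succ k ihk =>
    induction m with
    | zero =>
      simp only [hh_zero, pow_zero, mul_one, abs_one]
      calc (1:ℝ) ≤ 2 ^ k := one_le_pow₀ (by norm_num)
      _ ≤ 2 ^ (k+1) := by
          apply pow_le_pow_right₀ <;> norm_num
    | succ m ihm =>
      rw [hh_succ]
      have h1 : |hh k (m+1) x| ≤ 2 ^ k * (2*r)^(m+1) :=
        ihk (m+1) (fun i hi => hx i (Nat.lt_succ_of_lt hi))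
      have h2 : |hh (k+1) m x| ≤ 2 ^ (k+1) * (2*r)^m := ihm
      have hxk : |x k| ≤ r := hx k (Nat.lt_succ_self k)
      calc |hh k (m+1) x + x k * hh (k+1) m x|
          ≤ |hh k (m+1) x| + |x k| * |hh (k+1) m x| := by
            rw [← abs_mul]; exact abs_add_le _ _
        _ ≤ 2 ^ k * (2*r)^(m+1) + r * (2 ^ (k+1) * (2*r)^m) := by
            gcongr
        _ = 2 ^ (k+1) * (2*r)^(m+1) := by ring

end

noncomputable section
open Finset

/-- divided difference of the monomial `t ^ p` over nodes `x 0, …, x k`. -/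
def dd (k p : ℕ) (x : ℕ → ℝ) : ℝ := if k ≤ p then hh (k+1) (p - k) x else 0

lemma dd_continuous (k p : ℕ) : Continuous fun x : ℕ → ℝ => dd k p x := by
  unfold dd
  split
  · exact hh_continuous _ _
  · exact continuous_const

lemma dd_at_zero (k p : ℕ) : dd k p (fun _ => 0) = if p = k then 1 else 0 := by
  unfold dd
  rcases le_or_gt k p with h | h
  · rcases Nat.lt_or_ge k p with h2 | h2
    · obtain ⟨m, hm⟩ : ∃ m, p - k = m + 1 := ⟨p - k - 1, by omega⟩
      rw [if_pos h, hm, hh_at_zero, if_neg (by omega)]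
    · have : p = k := le_antisymm h2 h
      rw [if_pos h, this, Nat.sub_self, hh_zero, if_pos rfl]
  · rw [if_neg (by omega), if_neg (by omega)]

lemma dd_bound (k p : ℕ) (x : ℕ → ℝ) (r : ℝ) (hr : 1 ≤ r)
    (hx : ∀ i, i < k + 1 → |x i| ≤ r) : |dd k p x| ≤ 2 ^ (k+1) * (2*r) ^ p := by
  unfold dd
  split
  · calc |hh (k+1) (p-k) x| ≤ 2 ^ (k+1) * (2*r) ^ (p-k) :=
        hh_bound _ _ _ r (by linarith) hx
    _ ≤ 2 ^ (k+1) * (2*r) ^ p := by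
        gcongr
        · linarith
        · omega
  · simp; positivity

lemma newton (x : ℕ → ℝ) (i p : ℕ) :
    x i ^ p = ∑ k ∈ range (i+1), dd k p x * ∏ l ∈ range k, (x i - x l) := by
  induction p with
  | zero =>
    rw [Finset.sum_eq_single_of_mem 0 (by simp)]
    · simp [dd, hh_zero]
    · intro k _ hk
      obtain ⟨k', rfl⟩ : ∃ k', k = k' + 1 := ⟨k - 1, by omega⟩
      simp [dd]
  | succ p ih =>
    set e : ℕ → ℝ := fun k => if k ≤ p+1 then hh k (p+1-k) x else 0 with he
    have key : ∀ k, dd k (p+1) x = e k + x k * dd k p x := by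
      intro k
      rcases Nat.lt_or_ge p k with h | h
      · rcases Nat.lt_or_ge (p+1) k with h2 | h2
        · simp only [dd, he, if_neg (by omega : ¬ k ≤ p+1), if_neg (by omega : ¬ k ≤ p)]
          ring
        · have hk : k = p + 1 := by omega
          subst hk
          simp only [dd, he, if_pos (le_refl _), if_neg (by omega : ¬ p+1 ≤ p),
            Nat.sub_self, hh_zero]
          ring
      · have h1 : p + 1 - k = (p - k) + 1 := by omega
        simp only [dd, he, if_pos (by omega : k ≤ p+1), if_pos h, h1, hh_succ]
    have shift : ∑ k ∈ range (i+1), dd k p x * ∏ l ∈ range (k+1), (x i - x l)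
        = ∑ k ∈ range (i+1), e k * ∏ l ∈ range k, (x i - x l) := by
      rw [Finset.sum_range_succ, Finset.sum_range_succ']
      have hz : ∏ l ∈ range (i+1), (x i - x l) = 0 :=
        Finset.prod_eq_zero (Finset.self_mem_range_succ i) (by ring)
      have he0 : e 0 = 0 := by simp [he]
      rw [hz, he0]
      simp only [mul_zero, add_zero, zero_mul]
      apply Finset.sum_congr rfl
      intro k _
      have : e (k+1) = dd k p x := by
        simp only [he, dd, Nat.add_le_add_iff_right]
        rcases le_or_gt k p with h | h
        · rw [if_pos h, if_pos h]
          congr 1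
          omega
        · rw [if_neg (by omega), if_neg (by omega)]
      rw [this]
    calc x i ^ (p+1) = x i * x i ^ p := by ring
    _ = ∑ k ∈ range (i+1), dd k p x * (x i * ∏ l ∈ range k, (x i - x l)) := by
        rw [ih, Finset.mul_sum]
        apply Finset.sum_congr rfl
        intro k _; ring
    _ = ∑ k ∈ range (i+1), (dd k p x * ∏ l ∈ range (k+1), (x i - x l)
          + x k * dd k p x * ∏ l ∈ range k, (x i - x l)) := by
        apply Finset.sum_congr rfl
        intro k _
        rw [Finset.prod_range_succ]
        ring
    _ = ∑ k ∈ range (i+1), dd k (p+1) x * ∏ l ∈ range k, (x i - x l) := by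
        rw [Finset.sum_add_distrib, shift, ← Finset.sum_add_distrib]
        apply Finset.sum_congr rfl
        intro k _
        rw [key k]
        ring

lemma newton_ext (n : ℕ) (x : ℕ → ℝ) (i p : ℕ) (hi : i < n) :
    x i ^ p = ∑ k ∈ range n, dd k p x * ∏ l ∈ range k, (x i - x l) := by
  rw [newton x i p]
  apply Finset.sum_subset (Finset.range_subset_range.mpr (by omega))
  intro k _ hk
  have hik : i ∈ range k := by
    simp only [Finset.mem_range] at hk ⊢
    omega
  rw [Finset.prod_eq_zero hik (by ring), mul_zero]

end

noncomputable section
open Finset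

lemma summable_dd (α : ℕ → ℝ) (M q : ℝ) (hq : 0 ≤ q)
    (hα : ∀ p, |α p| ≤ M * q ^ p / p.factorial)
    (x : ℕ → ℝ) (k : ℕ) (r : ℝ) (hr : 1 ≤ r) (hx : ∀ l, |x l| ≤ r) :
    Summable (fun p => α p * dd k p x) := by
  apply Summable.of_norm_bounded
    (g := fun p => (M * 2 ^ (k+1)) * ((2*r*q) ^ p / p.factorial))
  · exact (Real.summable_pow_div_factorial (2*r*q)).mul_left _
  · intro p
    rw [Real.norm_eq_abs, abs_mul]
    have h1 := hα p
    have h2 := dd_bound k p x r hr (fun i _ => hx i)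
    have hM : 0 ≤ M * q ^ p / p.factorial := le_trans (abs_nonneg _) h1
    calc |α p| * |dd k p x| ≤ (M * q ^ p / p.factorial) * (2 ^ (k+1) * (2*r) ^ p) := by
          apply mul_le_mul h1 h2 (abs_nonneg _) hM
    _ = (M * 2 ^ (k+1)) * ((2*r*q) ^ p / p.factorial) := by
        rw [mul_pow]
        field_simp
        ring
  
lemma series_newton (n : ℕ) (α : ℕ → ℝ) (M q : ℝ) (hq : 0 ≤ q)
    (hα : ∀ p, |α p| ≤ M * q ^ p / p.factorial)
    (x : ℕ → ℝ) (i : ℕ) (hi : i < n) (r : ℝ) (hr : 1 ≤ r) (hx : ∀ l, |x l| ≤ r) :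
    ∑' p, α p * x i ^ p
      = ∑ k ∈ range n, (∑' p, α p * dd k p x) * ∏ l ∈ range k, (x i - x l) := by
  have h1 : ∀ p, α p * x i ^ p
      = ∑ k ∈ range n, α p * dd k p x * ∏ l ∈ range k, (x i - x l) := by
    intro p
    rw [newton_ext n x i p hi, Finset.mul_sum]
    apply Finset.sum_congr rfl
    intro k _; ring
  rw [tsum_congr h1, Summable.tsum_finsetSum
    (fun k _ => ((summable_dd α M q hq hα x k r hr hx).mul_right _))]
  apply Finset.sum_congr rfl
  intro k _
  rw [tsum_mul_right]

/-- extension of a `Fin n` tuple to `ℕ → ℝ` by zero. -/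
def xext (n : ℕ) (x : Fin n → ℝ) : ℕ → ℝ := fun l => if h : l < n then x ⟨l, h⟩ else 0

lemma xext_continuous (n : ℕ) : Continuous (xext n) := by
  apply continuous_pi
  intro l
  unfold xext
  split
  · exact continuous_apply _
  · exact continuous_const

lemma xext_zero (n : ℕ) : xext n 0 = fun _ => 0 := by
  funext l
  unfold xext
  split <;> rfl

lemma xext_bound (n : ℕ) (x : Fin n → ℝ) (l : ℕ) :
    |xext n x l| ≤ 1 + ∑ j : Fin n, |x j| := by
  have h0 : (0:ℝ) ≤ ∑ j : Fin n, |x j| := Finset.sum_nonneg fun j _ => abs_nonneg _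
  unfold xext
  split
  · rename_i h
    calc |x ⟨l, h⟩| ≤ ∑ j : Fin n, |x j| :=
        Finset.single_le_sum (fun j _ => abs_nonneg (x j)) (Finset.mem_univ _)
    _ ≤ 1 + ∑ j : Fin n, |x j| := by linarith
  · simp; linarith

lemma one_le_rbound (n : ℕ) (x : Fin n → ℝ) : 1 ≤ 1 + ∑ j : Fin n, |x j| := by
  have h0 : (0:ℝ) ≤ ∑ j : Fin n, |x j| := Finset.sum_nonneg fun j _ => abs_nonneg _
  linarith

/-- `k`-th divided difference data for `exp(· * c)` at nodes `x`. -/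
def SA (n : ℕ) (k : ℕ) (x : Fin n → ℝ) (c : ℝ) : ℝ :=
  ∑' p, c ^ p / p.factorial * dd k p (xext n x)

def TT (n : ℕ) (k l : ℕ) (x y : Fin n → ℝ) : ℝ :=
  ∑' p, (2:ℝ)⁻¹ ^ p / p.factorial * dd k p (xext n x) * dd l p (xext n y)

lemma exp_abs_bound (c : ℝ) (p : ℕ) : |c ^ p / (p.factorial:ℝ)| ≤ 1 * |c| ^ p / p.factorial := by
  rw [abs_div, abs_pow, Nat.abs_cast, one_mul]

lemma exp_factor (n : ℕ) (x : Fin n → ℝ) (c : ℝ) (i : Fin n) :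
    Real.exp (x i * c)
      = ∑ k ∈ range n, SA n k x c * ∏ l ∈ range k, (x i - xext n x l) := by
  have hxi : xext n x (i : ℕ) = x i := by
    unfold xext
    rw [dif_pos i.isLt]
  have h1 : Real.exp (x i * c) = ∑' p, c ^ p / p.factorial * (xext n x) (i:ℕ) ^ p := by
    rw [Real.exp_eq_exp_ℝ, NormedSpace.exp_eq_tsum_div]
    apply tsum_congr
    intro p
    rw [hxi, mul_pow]
    ring
  rw [h1, series_newton n _ 1 |c| (abs_nonneg c) (exp_abs_bound c) (xext n x) i i.isLt
    (1 + ∑ j : Fin n, |x j|) (one_le_rbound n x) (xext_bound n x)]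
  apply Finset.sum_congr rfl
  intro k _
  rw [hxi]
  rfl

lemma SA_half_factor (n : ℕ) (x y : Fin n → ℝ) (k : ℕ) (j : Fin n) :
    SA n k x (y j / 2)
      = ∑ l ∈ range n, TT n k l x y * ∏ t ∈ range l, (y j - xext n y t) := by
  set rx := 1 + ∑ j : Fin n, |x j| with hrx
  have hyj : xext n y (j : ℕ) = y j := by
    unfold xext
    rw [dif_pos j.isLt]
  have h1 : SA n k x (y j / 2)
      = ∑' p, ((2:ℝ)⁻¹ ^ p / p.factorial * dd k p (xext n x)) * (xext n y) (j:ℕ) ^ p := by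
    unfold SA
    apply tsum_congr
    intro p
    rw [hyj, div_pow, div_eq_mul_inv (y j ^ p), ← inv_pow]
    ring
  have hα : ∀ p, |(2:ℝ)⁻¹ ^ p / p.factorial * dd k p (xext n x)|
      ≤ (2 ^ (k+1)) * (2*rx) ^ p / p.factorial := by
    intro p
    rw [abs_mul, abs_div, abs_pow, Nat.abs_cast]
    have h2 := dd_bound k p (xext n x) rx (one_le_rbound n x) (fun i _ => xext_bound n x i)
    have hb : |(2:ℝ)⁻¹| ^ p ≤ 1 := by
      apply pow_le_one₀ (abs_nonneg _)
      rw [abs_of_pos] <;> norm_num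
    calc |(2:ℝ)⁻¹| ^ p / p.factorial * |dd k p (xext n x)|
        ≤ 1 / p.factorial * (2 ^ (k+1) * (2*rx) ^ p) := by
          apply mul_le_mul _ h2 (abs_nonneg _) (by positivity)
          apply div_le_div_of_nonneg_right hb <;> positivity
      _ = (2 ^ (k+1)) * (2*rx) ^ p / p.factorial := by ring
  rw [h1, series_newton n _ (2 ^ (k+1)) (2*rx) (by positivity) hα (xext n y) j j.isLt
    (1 + ∑ i : Fin n, |y i|) (one_le_rbound n y) (xext_bound n y)]
  apply Finset.sum_congr rfl
  intro l _
  rw [hyj]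
  rfl

end

noncomputable section
open Finset Filter

lemma eventually_small (n : ℕ) :
    ∀ᶠ x : Fin n → ℝ in nhds 0, (1 + ∑ j : Fin n, |x j|) ≤ 2 := by
  have hc : Continuous fun x : Fin n → ℝ => ∑ j : Fin n, |x j| :=
    continuous_finset_sum _ (fun j _ => (continuous_apply j).abs)
  have h0 : Tendsto (fun x : Fin n → ℝ => ∑ j : Fin n, |x j|) (nhds 0) (nhds 0) := by
    have := hc.tendsto 0
    simpa using this
  filter_upwards [h0.eventually_le_const (by norm_num : (0:ℝ) < 1)] with x hx
  linarith

lemma dd_tendsto (n k : ℕ) (p : ℕ) :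
    Tendsto (fun x : Fin n → ℝ => dd k p (xext n x)) (nhds 0)
      (nhds (if p = k then 1 else 0)) := by
  have hc : Continuous fun x : Fin n → ℝ => dd k p (xext n x) :=
    (dd_continuous k p).comp (xext_continuous n)
  have := hc.tendsto 0
  rwa [xext_zero, dd_at_zero] at this

lemma SA_tendsto (n k : ℕ) (c : ℝ) :
    Tendsto (fun x : Fin n → ℝ => SA n k x c) (nhds 0)
      (nhds (c ^ k / k.factorial)) := by
  have key : Tendsto (fun x : Fin n → ℝ => SA n k x c) (nhds 0)
      (nhds (∑' p, c ^ p / p.factorial * (if p = k then 1 else 0))) := by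
    apply tendsto_tsum_of_dominated_convergence
      (bound := fun p => 2 ^ (k+1) * ((4*|c|) ^ p / p.factorial))
    · exact (Real.summable_pow_div_factorial (4*|c|)).mul_left _
    · intro p
      exact ((tendsto_const_nhds).mul (dd_tendsto n k p))
    · filter_upwards [eventually_small n] with x hx
      intro p
      rw [Real.norm_eq_abs, abs_mul]
      have h2 := dd_bound k p (xext n x) _ (one_le_rbound n x) (fun i _ => xext_bound n x i)
      have h3 : (2 * (1 + ∑ j : Fin n, |x j|)) ^ p ≤ 4 ^ p := by
        apply pow_le_pow_left₀ (by positivity)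
        linarith
      calc |c ^ p / p.factorial| * |dd k p (xext n x)|
          ≤ (|c| ^ p / p.factorial) * (2 ^ (k+1) * 4 ^ p) := by
            apply mul_le_mul _ (h2.trans (by nlinarith [pow_pos (by norm_num : (0:ℝ) < 2) (k+1)])) (abs_nonneg _) (by positivity)
            rw [abs_div, abs_pow, Nat.abs_cast]
        _ = 2 ^ (k+1) * ((4*|c|) ^ p / p.factorial) := by
            rw [mul_pow]; ring
  have hval : (∑' p, c ^ p / p.factorial * (if p = k then 1 else 0))
      = c ^ k / k.factorial := by
    rw [tsum_eq_single k]
    · simp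
    · intro p hp
      rw [if_neg hp, mul_zero]
  rwa [hval] at key

lemma TT_tendsto (n k l : ℕ) :
    Tendsto (fun q : (Fin n → ℝ) × (Fin n → ℝ) => TT n k l q.1 q.2) (nhds (0,0))
      (nhds (if k = l then (2:ℝ)⁻¹ ^ k / k.factorial else 0)) := by
  have h1 : Tendsto (fun q : (Fin n → ℝ) × (Fin n → ℝ) => q.1) (nhds (0,0)) (nhds 0) :=
    continuous_fst.tendsto' _ _ rfl
  have h2 : Tendsto (fun q : (Fin n → ℝ) × (Fin n → ℝ) => q.2) (nhds (0,0)) (nhds 0) :=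
    continuous_snd.tendsto' _ _ rfl
  have key : Tendsto (fun q : (Fin n → ℝ) × (Fin n → ℝ) => TT n k l q.1 q.2) (nhds (0,0))
      (nhds (∑' p, (2:ℝ)⁻¹ ^ p / p.factorial *
        (if p = k then (1:ℝ) else 0) * (if p = l then 1 else 0))) := by
    apply tendsto_tsum_of_dominated_convergence
      (bound := fun p => 2 ^ (k+1) * 2 ^ (l+1) * ((16:ℝ) ^ p / p.factorial))
    · exact (Real.summable_pow_div_factorial 16).mul_left _
    · intro p
      exact ((tendsto_const_nhds).mul ((dd_tendsto n k p).comp h1)).mul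
        ((dd_tendsto n l p).comp h2)
    · filter_upwards [h1.eventually (eventually_small n), h2.eventually (eventually_small n)]
        with q hx hy
      intro p
      rw [Real.norm_eq_abs, abs_mul, abs_mul]
      have hdx := dd_bound k p (xext n q.1) _ (one_le_rbound n q.1) (fun i _ => xext_bound n q.1 i)
      have hdy := dd_bound l p (xext n q.2) _ (one_le_rbound n q.2) (fun i _ => xext_bound n q.2 i)
      have h3x : (2 * (1 + ∑ j : Fin n, |q.1 j|)) ^ p ≤ 4 ^ p :=
        pow_le_pow_left₀ (by positivity) (by linarith) p
      have h3y : (2 * (1 + ∑ j : Fin n, |q.2 j|)) ^ p ≤ 4 ^ p :=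
        pow_le_pow_left₀ (by positivity) (by linarith) p
      have ha : |(2:ℝ)⁻¹ ^ p / p.factorial| ≤ 1 / p.factorial := by
        rw [abs_div, abs_pow, Nat.abs_cast]
        apply div_le_div_of_nonneg_right _ (by positivity)
        apply pow_le_one₀ (abs_nonneg _)
        rw [abs_of_pos] <;> norm_num
      have e1 : |dd k p (xext n q.1)| ≤ 2 ^ (k+1) * 4 ^ p :=
        hdx.trans (mul_le_mul_of_nonneg_left h3x (by positivity))
      have e2 : |dd l p (xext n q.2)| ≤ 2 ^ (l+1) * 4 ^ p :=
        hdy.trans (mul_le_mul_of_nonneg_left h3y (by positivity))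
      calc |(2:ℝ)⁻¹ ^ p / p.factorial| * |dd k p (xext n q.1)| * |dd l p (xext n q.2)|
          ≤ (1 / p.factorial) * (2 ^ (k+1) * 4 ^ p) * (2 ^ (l+1) * 4 ^ p) :=
            mul_le_mul (mul_le_mul ha e1 (abs_nonneg _) (by positivity)) e2
              (abs_nonneg _) (by positivity)
        _ = 2 ^ (k+1) * 2 ^ (l+1) * ((16:ℝ) ^ p / p.factorial) := by
            rw [show (16:ℝ) ^ p = 4 ^ p * 4 ^ p by rw [← mul_pow]; norm_num]
            ring
  have hval : (∑' p, (2:ℝ)⁻¹ ^ p / p.factorial *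
        (if p = k then (1:ℝ) else 0) * (if p = l then 1 else 0))
      = (if k = l then (2:ℝ)⁻¹ ^ k / k.factorial else 0) := by
    by_cases hkl : k = l
    · subst hkl
      rw [if_pos rfl, tsum_eq_single k]
      · simp
      · intro p hp
        simp [hp]
    · rw [if_neg hkl]
      have : ∀ p : ℕ, (2:ℝ)⁻¹ ^ p / p.factorial *
          (if p = k then (1:ℝ) else 0) * (if p = l then 1 else 0) = 0 := by
        intro p
        by_cases hpk : p = k
        · rw [if_neg (by omega : ¬ p = l), mul_zero]
        · simp [hpk]
      rw [tsum_congr this, tsum_zero]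
  rwa [hval] at key

end

noncomputable section
open Finset Filter Matrix

def NM (n : ℕ) (x : Fin n → ℝ) : Matrix (Fin n) (Fin n) ℝ :=
  Matrix.of fun i k => ∏ l ∈ range (k:ℕ), (x i - xext n x l)

lemma xext_coe (n : ℕ) (x : Fin n → ℝ) (i : Fin n) : xext n x (i : ℕ) = x i := by
  unfold xext
  rw [dif_pos i.isLt]

lemma NM_det (n : ℕ) (x : Fin n → ℝ) :
    (NM n x).det = ∏ i : Fin n, ∏ l ∈ range (i:ℕ), (x i - xext n x l) := by
  rw [Matrix.det_of_lowerTriangular (NM n x)]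
  · rfl
  · intro i k h
    have hik : (i:ℕ) < (k:ℕ) := h
    have : (i:ℕ) ∈ range (k:ℕ) := Finset.mem_range.mpr hik
    exact Finset.prod_eq_zero this (by rw [xext_coe]; ring)

lemma NM_det_ne_zero (n : ℕ) (x : Fin n → ℝ) (hx : StrictAnti x) : (NM n x).det ≠ 0 := by
  rw [NM_det]
  apply Finset.prod_ne_zero_iff.mpr
  intro i _
  apply Finset.prod_ne_zero_iff.mpr
  intro l hl
  have hli : l < (i:ℕ) := Finset.mem_range.mp hl
  have hl' : l < n := hli.trans i.isLt
  have : xext n x l = x ⟨l, hl'⟩ := by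
    unfold xext
    rw [dif_pos hl']
  rw [this]
  have hlt : (⟨l, hl'⟩ : Fin n) < i := hli
  have := hx hlt
  intro hcon
  have : x i = x ⟨l, hl'⟩ := by linarith [sub_eq_zero.mp hcon]
  linarith

lemma det_exp_eq (n : ℕ) (x : Fin n → ℝ) (c : Fin n → ℝ) :
    Matrix.det (Matrix.of fun i j => Real.exp (x i * c j))
      = (NM n x).det *
        Matrix.det (Matrix.of fun k j : Fin n => SA n (k:ℕ) x (c j)) := by
  rw [← Matrix.det_mul]
  congr 1
  ext i j
  rw [Matrix.mul_apply]
  simp only [Matrix.of_apply, NM, Matrix.of_apply]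
  rw [exp_factor n x (c j) i]
  rw [← Fin.sum_univ_eq_sum_range
    (fun k => SA n k x (c j) * ∏ l ∈ range k, (x i - xext n x l)) n]
  apply Finset.sum_congr rfl
  intro k _
  ring

lemma det_SAhalf (n : ℕ) (x y : Fin n → ℝ) :
    Matrix.det (Matrix.of fun k j : Fin n => SA n (k:ℕ) x (y j / 2))
      = (NM n y).det *
        Matrix.det (Matrix.of fun l k : Fin n => TT n (k:ℕ) (l:ℕ) x y) := by
  rw [← Matrix.det_transpose (Matrix.of fun k j : Fin n => SA n (k:ℕ) x (y j / 2))]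
  rw [← Matrix.det_mul]
  congr 1
  ext j k
  rw [Matrix.mul_apply]
  simp only [Matrix.transpose_apply, Matrix.of_apply, NM]
  rw [SA_half_factor n x y (k:ℕ) j]
  rw [← Fin.sum_univ_eq_sum_range
    (fun l => TT n (k:ℕ) l x y * ∏ t ∈ range l, (y j - xext n y t)) n]
  apply Finset.sum_congr rfl
  intro l _
  ring

end

noncomputable section
open Finset Filter Matrix

lemma heat1_entry (a c : ℝ) : heatK 1 a c
    = ((Real.sqrt (2*Real.pi*1))⁻¹ * Real.exp (-a^2/2)) *
      (Real.exp (-c^2/2) * Real.exp (a*c)) := by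
  unfold heatK
  have h : (-(a-c)^2/(2*1) : ℝ) = -a^2/2 + (-c^2/2 + a*c) := by ring
  rw [h, Real.exp_add, Real.exp_add]
  ring

lemma heat2_entry (a c : ℝ) : heatK 2 a c
    = ((Real.sqrt (2*Real.pi*2))⁻¹ * Real.exp (-a^2/4)) *
      (Real.exp (-c^2/4) * Real.exp (a*(c/2))) := by
  unfold heatK
  have h : (-(a-c)^2/(2*2) : ℝ) = -a^2/4 + (-c^2/4 + a*(c/2)) := by ring
  rw [h, Real.exp_add, Real.exp_add]
  ring

lemma det_scaled (n : ℕ) (u w : Fin n → ℝ) (E : Matrix (Fin n) (Fin n) ℝ) :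
    Matrix.det (Matrix.of fun i j : Fin n => u i * (w j * E i j))
      = (∏ i, u i) * ((∏ j, w j) * E.det) := by
  have h1 : (Matrix.of fun i j : Fin n => u i * (w j * E i j))
      = Matrix.of fun i j => u i * ((Matrix.of fun i j : Fin n => w j * E i j) i j) := rfl
  rw [h1, Matrix.det_mul_column]
  congr 1
  have h2 : (Matrix.of fun i j : Fin n => w j * E i j)
      = Matrix.of fun i j => w j * (E i j) := rfl
  rw [h2, Matrix.det_mul_row]

lemma det_heat1 (n : ℕ) (x c : Fin n → ℝ) :
    Matrix.det (Matrix.of fun i j : Fin n => heatK 1 (x i) (c j))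
      = (((Real.sqrt (2*Real.pi*1))⁻¹)^n * ∏ i, Real.exp (-(x i)^2/2))
        * ((∏ j, Real.exp (-(c j)^2/2))
        * Matrix.det (Matrix.of fun i j : Fin n => Real.exp (x i * c j))) := by
  have h1 : (Matrix.of fun i j : Fin n => heatK 1 (x i) (c j))
      = Matrix.of fun i j : Fin n =>
          ((Real.sqrt (2*Real.pi*1))⁻¹ * Real.exp (-(x i)^2/2)) *
          (Real.exp (-(c j)^2/2) *
            (Matrix.of fun i j : Fin n => Real.exp (x i * c j)) i j) := by
    ext i j
    exact heat1_entry _ _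
  rw [h1, det_scaled]
  rw [Finset.prod_mul_distrib, Finset.prod_const, Finset.card_univ, Fintype.card_fin]

lemma det_heat2 (n : ℕ) (x c : Fin n → ℝ) :
    Matrix.det (Matrix.of fun i j : Fin n => heatK 2 (x i) (c j))
      = (((Real.sqrt (2*Real.pi*2))⁻¹)^n * ∏ i, Real.exp (-(x i)^2/4))
        * ((∏ j, Real.exp (-(c j)^2/4))
        * Matrix.det (Matrix.of fun i j : Fin n => Real.exp (x i * (c j / 2)))) := by
  have h1 : (Matrix.of fun i j : Fin n => heatK 2 (x i) (c j))
      = Matrix.of fun i j : Fin n =>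
          ((Real.sqrt (2*Real.pi*2))⁻¹ * Real.exp (-(x i)^2/4)) *
          (Real.exp (-(c j)^2/4) *
            (Matrix.of fun i j : Fin n => Real.exp (x i * (c j / 2))) i j) := by
    ext i j
    exact heat2_entry _ _
  rw [h1, det_scaled]
  rw [Finset.prod_mul_distrib, Finset.prod_const, Finset.card_univ, Fintype.card_fin]

lemma heatK_symm (t a c : ℝ) : heatK t a c = heatK t c a := by
  unfold heatK
  rw [show ((a-c)^2 : ℝ) = (c-a)^2 by ring]

lemma gauss_tendsto (n : ℕ) (c : ℝ) :
    Tendsto (fun x : Fin n → ℝ => ∏ i, Real.exp (-(x i)^2/c)) (nhds 0) (nhds 1) := by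
  have hc : Continuous fun x : Fin n → ℝ => ∏ i, Real.exp (-(x i)^2/c) := by
    apply continuous_finset_prod
    intro i _
    exact Real.continuous_exp.comp (by fun_prop)
  have := hc.tendsto 0
  simpa using this

lemma DA_tendsto (n : ℕ) (b : Fin n → ℝ) :
    Tendsto (fun x : Fin n → ℝ =>
        Matrix.det (Matrix.of fun k j : Fin n => SA n (k:ℕ) x (b j))) (nhds 0)
      (nhds (Matrix.det (Matrix.of fun k j : Fin n =>
        (b j)^(k:ℕ) / ((k:ℕ).factorial : ℝ)))) := by
  have hm : Tendsto (fun x : Fin n → ℝ =>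
      (Matrix.of fun k j : Fin n => SA n (k:ℕ) x (b j))) (nhds 0)
      (nhds (Matrix.of fun k j : Fin n => (b j)^(k:ℕ) / ((k:ℕ).factorial : ℝ))) := by
    apply tendsto_pi_nhds.mpr
    intro k
    apply tendsto_pi_nhds.mpr
    intro j
    exact SA_tendsto n (k:ℕ) (b j)
  exact ((Continuous.matrix_det continuous_id).tendsto _).comp hm

lemma TM_tendsto (n : ℕ) :
    Tendsto (fun q : (Fin n → ℝ) × (Fin n → ℝ) =>
        Matrix.det (Matrix.of fun l k : Fin n => TT n (k:ℕ) (l:ℕ) q.1 q.2)) (nhds (0,0))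
      (nhds (∏ k : Fin n, ((2:ℝ)⁻¹^(k:ℕ) / ((k:ℕ).factorial : ℝ)))) := by
  have hm : Tendsto (fun q : (Fin n → ℝ) × (Fin n → ℝ) =>
      (Matrix.of fun l k : Fin n => TT n (k:ℕ) (l:ℕ) q.1 q.2)) (nhds (0,0))
      (nhds (Matrix.diagonal fun k : Fin n => (2:ℝ)⁻¹^(k:ℕ) / ((k:ℕ).factorial : ℝ))) := by
    apply tendsto_pi_nhds.mpr
    intro l
    apply tendsto_pi_nhds.mpr
    intro k
    have h := TT_tendsto n (k:ℕ) (l:ℕ)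
    have hval : (if (k:ℕ) = (l:ℕ) then (2:ℝ)⁻¹ ^ (k:ℕ) / ((k:ℕ).factorial:ℝ) else 0)
        = Matrix.diagonal (fun k : Fin n => (2:ℝ)⁻¹^(k:ℕ) / ((k:ℕ).factorial : ℝ)) l k := by
      rw [Matrix.diagonal]
      simp only [Matrix.of_apply]
      by_cases hkl : l = k
      · subst hkl
        rw [if_pos rfl, if_pos rfl]
      · rw [if_neg (fun h' => hkl (Fin.ext h'.symm)), if_neg hkl]
    rw [hval] at h
    exact h
  have := ((Continuous.matrix_det continuous_id).tendsto
    (Matrix.diagonal fun k : Fin n => (2:ℝ)⁻¹^(k:ℕ) / ((k:ℕ).factorial : ℝ))).comp hm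
  rw [show (id (Matrix.diagonal fun k : Fin n => (2:ℝ)⁻¹^(k:ℕ) / ((k:ℕ).factorial : ℝ))).det
    = ∏ k : Fin n, ((2:ℝ)⁻¹^(k:ℕ) / ((k:ℕ).factorial : ℝ)) by
      rw [id_eq, Matrix.det_diagonal]] at this
  exact this

end

noncomputable section
open Finset Filter Matrix

lemma DA0_det (n : ℕ) (b : Fin n → ℝ) :
    Matrix.det (Matrix.of fun k j : Fin n => (b j)^(k:ℕ) / ((k:ℕ).factorial : ℝ))
      = (∏ k : Fin n, (((k:ℕ).factorial : ℝ))⁻¹) * ∏ i, ∏ j ∈ Ioi i, (b j - b i) := by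
  have h1 : (Matrix.of fun k j : Fin n => (b j)^(k:ℕ) / ((k:ℕ).factorial : ℝ))
      = Matrix.of fun k j : Fin n => (((k:ℕ).factorial : ℝ))⁻¹ *
          ((Matrix.vandermonde b)ᵀ k j) := by
    ext k j
    simp only [Matrix.of_apply, Matrix.transpose_apply, Matrix.vandermonde_apply]
    rw [div_eq_inv_mul]
  rw [h1, Matrix.det_mul_column, Matrix.det_transpose, Matrix.det_vandermonde]

lemma const_eval (n : ℕ) (hn : 1 ≤ n) (b : Fin n → ℝ) :
    ((Real.sqrt (2*Real.pi*1))⁻¹^n * (Real.sqrt (2*Real.pi*1))⁻¹^n *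
        (∏ j, Real.exp (-(b j)^2/2)) * (∏ j, Real.exp (-(b j)^2/2)) *
      ((((∏ k : Fin n, (((k:ℕ).factorial : ℝ))⁻¹) * ∏ i, ∏ j ∈ Ioi i, (b j - b i)) *
        ((∏ k : Fin n, (((k:ℕ).factorial : ℝ))⁻¹) * ∏ i, ∏ j ∈ Ioi i, (b j - b i)))))
    / ((Real.sqrt (2*Real.pi*2))⁻¹^n * ∏ k : Fin n, ((2:ℝ)⁻¹^(k:ℕ) / ((k:ℕ).factorial : ℝ)))
    = (2 ^ (n * (n - 1) / 2) /
        (Real.pi ^ ((n : ℝ) / 2) * ∏ j ∈ Finset.Icc 1 (n - 1), (Nat.factorial j : ℝ))) *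
      (∏ i : Fin n, ∏ j ∈ Finset.Ioi i, (b i - b j) ^ 2) *
      ∏ j : Fin n, Real.exp (-(b j) ^ 2) := by
  have hpi := Real.pi_pos
  -- exponential products
  have hGb : (∏ j : Fin n, Real.exp (-(b j)^2/2)) * (∏ j : Fin n, Real.exp (-(b j)^2/2))
      = ∏ j : Fin n, Real.exp (-(b j)^2) := by
    rw [← Finset.prod_mul_distrib]
    apply Finset.prod_congr rfl
    intro j _
    rw [← Real.exp_add]
    congr 1
    ring
  -- vandermonde squares
  have hvdm : (∏ i : Fin n, ∏ j ∈ Ioi i, (b j - b i)) * (∏ i : Fin n, ∏ j ∈ Ioi i, (b j - b i))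
      = ∏ i : Fin n, ∏ j ∈ Ioi i, (b i - b j)^2 := by
    rw [← Finset.prod_mul_distrib]
    apply Finset.prod_congr rfl
    intro i _
    rw [← Finset.prod_mul_distrib]
    apply Finset.prod_congr rfl
    intro j _
    ring
  -- factorial products
  set F : ℝ := ∏ k : Fin n, (((k:ℕ).factorial : ℝ)) with hFdef
  have hFpos : 0 < F := Finset.prod_pos (fun k _ => by positivity)
  have hFinv : (∏ k : Fin n, (((k:ℕ).factorial : ℝ))⁻¹) = F⁻¹ := by
    rw [hFdef, ← Finset.prod_inv_distrib]
  have hIcc : (∏ j ∈ Finset.Icc 1 (n - 1), (Nat.factorial j : ℝ)) = F := by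
    have hset : Finset.Icc 1 (n-1) = Finset.Ico 1 n := by
      rw [← Finset.Ico_add_one_right_eq_Icc]
      congr 1
      omega
    rw [hset, hFdef, Fin.prod_univ_eq_prod_range (fun k => ((Nat.factorial k : ℝ))) n,
      Finset.prod_range_eq_mul_Ico _ (by omega : 0 < n), Nat.factorial_zero, Nat.cast_one,
      one_mul]
  -- powers of two
  have hW : (∏ k : Fin n, ((2:ℝ)⁻¹^(k:ℕ) / ((k:ℕ).factorial : ℝ)))
      = ((2:ℝ) ^ (n*(n-1)/2))⁻¹ * F⁻¹ := by
    rw [Finset.prod_div_distrib, div_eq_mul_inv, hFdef]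
    congr 1
    rw [Finset.prod_pow_eq_pow_sum, ← inv_pow]
    congr 1
    rw [Fin.sum_univ_eq_sum_range (fun i => i) n, Finset.sum_range_id]
  -- sqrt algebra
  have hs1 : (Real.sqrt (2*Real.pi*1))⁻¹^n * (Real.sqrt (2*Real.pi*1))⁻¹^n
      = ((2*Real.pi)⁻¹)^n := by
    rw [← mul_pow]
    congr 1
    rw [← mul_inv]
    congr 1
    rw [Real.mul_self_sqrt (by positivity)]
    ring
  have hs2 : Real.sqrt (2*Real.pi*2) = 2 * Real.sqrt Real.pi := by
    rw [show (2*Real.pi*2 : ℝ) = (2*Real.sqrt Real.pi)^2 by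
      rw [mul_pow, Real.sq_sqrt hpi.le]; ring]
    exact Real.sqrt_sq (by positivity)
  have hrpow : Real.pi ^ ((n : ℝ) / 2) = (Real.sqrt Real.pi)^n := by
    rw [show ((n:ℝ)/2) = (1/2 : ℝ) * (n:ℝ) by ring]
    rw [Real.rpow_mul hpi.le, Real.rpow_natCast]
    congr 1
    rw [← Real.sqrt_eq_rpow]
  have hsqrtpi : 0 < Real.sqrt Real.pi := Real.sqrt_pos.mpr hpi
  rw [hFinv, hW, hs2, hIcc, hrpow]
  rw [show (Real.sqrt (2 * Real.pi * 1))⁻¹ ^ n * (Real.sqrt (2 * Real.pi * 1))⁻¹ ^ n *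
      (∏ j : Fin n, Real.exp (-(b j)^2/2)) * (∏ j : Fin n, Real.exp (-(b j)^2/2)) *
      ((F⁻¹ * ∏ i : Fin n, ∏ j ∈ Ioi i, (b j - b i)) *
        (F⁻¹ * ∏ i : Fin n, ∏ j ∈ Ioi i, (b j - b i)))
    = (((2*Real.pi)⁻¹)^n) * (∏ j : Fin n, Real.exp (-(b j)^2)) *
      (F⁻¹ * F⁻¹ * ∏ i : Fin n, ∏ j ∈ Ioi i, (b i - b j)^2) by
      rw [← hs1, ← hGb, ← hvdm]; ring]
  have h2T : (0:ℝ) < 2 ^ (n*(n-1)/2) := by positivity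
  field_simp
  ring_nf
  have hk : (Real.sqrt Real.pi)⁻¹ ^ n * (Real.sqrt Real.pi)^n = 1 := by
    rw [← mul_pow, inv_mul_cancel₀ hsqrtpi.ne', one_pow]
  have hpi' : Real.pi⁻¹ ^ n = (Real.sqrt Real.pi)⁻¹ ^ n * (Real.sqrt Real.pi)⁻¹ ^ n := by
    rw [← mul_pow, ← mul_inv, Real.mul_self_sqrt hpi.le]
  rw [hpi', show ∀ P' : ℝ, ((Real.sqrt Real.pi)⁻¹ ^ n * (Real.sqrt Real.pi)⁻¹ ^ n * P')
      * (Real.sqrt Real.pi)^n = P' * (Real.sqrt Real.pi)⁻¹ ^ n from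
    fun P' => by linear_combination (P' * (Real.sqrt Real.pi)⁻¹ ^ n) * hk]


end

noncomputable section
open Finset Filter Matrix

theorem nonintersecting_bridge_density_limit (n : ℕ) (hn : 1 ≤ n)
    (b : Fin n → ℝ) (hb : StrictAnti b) :
    Tendsto
      (fun q : (Fin n → ℝ) × (Fin n → ℝ) =>
        Matrix.det (Matrix.of fun i j : Fin n => heatK 1 (q.1 i) (b j)) *
          Matrix.det (Matrix.of fun i j : Fin n => heatK 1 (b i) (q.2 j)) /
          Matrix.det (Matrix.of fun i j : Fin n => heatK 2 (q.1 i) (q.2 j)))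
      (nhdsWithin (0, 0) {q : (Fin n → ℝ) × (Fin n → ℝ) | StrictAnti q.1 ∧ StrictAnti q.2})
      (nhds
        ((2 ^ (n * (n - 1) / 2) /
            (Real.pi ^ ((n : ℝ) / 2) * ∏ j ∈ Finset.Icc 1 (n - 1), (Nat.factorial j : ℝ))) *
          (∏ i : Fin n, ∏ j ∈ Finset.Ioi i, (b i - b j) ^ 2) *
          ∏ j : Fin n, Real.exp (-(b j) ^ 2))) := by
  classical
  set DA : (Fin n → ℝ) → ℝ := fun x =>
    Matrix.det (Matrix.of fun k j : Fin n => SA n (k:ℕ) x (b j)) with hDAdef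
  set TM : (Fin n → ℝ) × (Fin n → ℝ) → ℝ := fun q =>
    Matrix.det (Matrix.of fun l k : Fin n => TT n (k:ℕ) (l:ℕ) q.1 q.2) with hTMdef
  set s1 : ℝ := (Real.sqrt (2*Real.pi*1))⁻¹ with hs1def
  set s2 : ℝ := (Real.sqrt (2*Real.pi*2))⁻¹ with hs2def
  set Gb : ℝ := ∏ j, Real.exp (-(b j)^2/2) with hGbdef
  set A : (Fin n → ℝ) × (Fin n → ℝ) → ℝ := fun q =>
    (s1^n * s1^n * Gb * Gb) * ((∏ i, Real.exp (-(q.1 i)^2/2)) *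
      ((∏ i, Real.exp (-(q.2 i)^2/2)) * (DA q.1 * DA q.2))) with hAdef
  set B : (Fin n → ℝ) × (Fin n → ℝ) → ℝ := fun q =>
    s2^n * ((∏ i, Real.exp (-(q.1 i)^2/4)) *
      ((∏ i, Real.exp (-(q.2 i)^2/4)) * TM q)) with hBdef
  have heq : ∀ q ∈ {q : (Fin n → ℝ) × (Fin n → ℝ) | StrictAnti q.1 ∧ StrictAnti q.2},
      Matrix.det (Matrix.of fun i j : Fin n => heatK 1 (q.1 i) (b j)) *
          Matrix.det (Matrix.of fun i j : Fin n => heatK 1 (b i) (q.2 j)) /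
          Matrix.det (Matrix.of fun i j : Fin n => heatK 2 (q.1 i) (q.2 j))
        = A q / B q := by
    rintro ⟨x, y⟩ ⟨hx, hy⟩
    simp only
    have e1 : Matrix.det (Matrix.of fun i j : Fin n => heatK 1 (x i) (b j))
        = (s1^n * ∏ i, Real.exp (-(x i)^2/2)) * (Gb *
          ((NM n x).det * Matrix.det (Matrix.of fun k j : Fin n => SA n (k:ℕ) x (b j)))) := by
      rw [det_heat1 n x b, det_exp_eq n x b]
    have e2 : Matrix.det (Matrix.of fun i j : Fin n => heatK 1 (b i) (y j))
        = (s1^n * ∏ i, Real.exp (-(y i)^2/2)) * (Gb *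
          ((NM n y).det * Matrix.det (Matrix.of fun k j : Fin n => SA n (k:ℕ) y (b j)))) := by
      have htr : (Matrix.of fun i j : Fin n => heatK 1 (b i) (y j))
          = (Matrix.of fun i j : Fin n => heatK 1 (y i) (b j))ᵀ := by
        ext i j
        exact heatK_symm 1 (b i) (y j)
      rw [htr, Matrix.det_transpose, det_heat1 n y b, det_exp_eq n y b]
    have e3 : Matrix.det (Matrix.of fun i j : Fin n => heatK 2 (x i) (y j))
        = (s2^n * ∏ i, Real.exp (-(x i)^2/4)) * ((∏ i, Real.exp (-(y i)^2/4)) *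
          ((NM n x).det * ((NM n y).det * TM (x, y)))) := by
      rw [det_heat2 n x y, det_exp_eq n x (fun j => y j / 2), det_SAhalf n x y]
    rw [e1, e2, e3]
    have hP : (NM n x).det * (NM n y).det ≠ 0 :=
      mul_ne_zero (NM_det_ne_zero n x hx) (NM_det_ne_zero n y hy)
    rw [show (s1^n * ∏ i, Real.exp (-(x i)^2/2)) * (Gb *
          ((NM n x).det * Matrix.det (Matrix.of fun k j : Fin n => SA n (k:ℕ) x (b j)))) *
        ((s1^n * ∏ i, Real.exp (-(y i)^2/2)) * (Gb *
          ((NM n y).det * Matrix.det (Matrix.of fun k j : Fin n => SA n (k:ℕ) y (b j)))))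
        = ((NM n x).det * (NM n y).det) * A (x, y) by rw [hAdef, hDAdef]; ring]
    rw [show (s2^n * ∏ i, Real.exp (-(x i)^2/4)) * ((∏ i, Real.exp (-(y i)^2/4)) *
          ((NM n x).det * ((NM n y).det * TM (x, y))))
        = ((NM n x).det * (NM n y).det) * B (x, y) by rw [hBdef]; ring]
    exact mul_div_mul_left _ _ hP
  have h1 : Tendsto (fun q : (Fin n → ℝ) × (Fin n → ℝ) => q.1) (nhds (0,0)) (nhds 0) :=
    continuous_fst.tendsto' _ _ rfl
  have h2 : Tendsto (fun q : (Fin n → ℝ) × (Fin n → ℝ) => q.2) (nhds (0,0)) (nhds 0) :=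
    continuous_snd.tendsto' _ _ rfl
  set D0 : ℝ := Matrix.det (Matrix.of fun k j : Fin n =>
    (b j)^(k:ℕ) / ((k:ℕ).factorial : ℝ)) with hD0def
  set W0 : ℝ := ∏ k : Fin n, ((2:ℝ)⁻¹^(k:ℕ) / ((k:ℕ).factorial : ℝ)) with hW0def
  have hAq : Tendsto A (nhds (0,0)) (nhds ((s1^n * s1^n * Gb * Gb) * (1 * (1 * (D0 * D0))))) := by
    apply Tendsto.mul tendsto_const_nhds
    apply Tendsto.mul ((gauss_tendsto n 2).comp h1)
    apply Tendsto.mul ((gauss_tendsto n 2).comp h2)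
    exact Tendsto.mul ((DA_tendsto n b).comp h1) ((DA_tendsto n b).comp h2)
  have hBq : Tendsto B (nhds (0,0)) (nhds (s2^n * (1 * (1 * W0)))) := by
    apply Tendsto.mul tendsto_const_nhds
    apply Tendsto.mul ((gauss_tendsto n 4).comp h1)
    apply Tendsto.mul ((gauss_tendsto n 4).comp h2)
    exact TM_tendsto n
  have hB0 : s2 ^ n * (1 * (1 * W0)) ≠ 0 := by
    have hs2pos : 0 < Real.sqrt (2*Real.pi*2) := Real.sqrt_pos.mpr (by positivity)
    have hW0pos : 0 < W0 := by
      rw [hW0def]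
      apply Finset.prod_pos
      intro k _
      positivity
    rw [hs2def]
    positivity
  have hlim : Tendsto (fun q => A q / B q)
      (nhdsWithin (0, 0) {q : (Fin n → ℝ) × (Fin n → ℝ) | StrictAnti q.1 ∧ StrictAnti q.2})
      (nhds (((s1^n * s1^n * Gb * Gb) * (1 * (1 * (D0 * D0)))) / (s2^n * (1 * (1 * W0))))) :=
    ((hAq.div hBq hB0)).mono_left nhdsWithin_le_nhds
  have hfinal : ((s1^n * s1^n * Gb * Gb) * (1 * (1 * (D0 * D0)))) / (s2^n * (1 * (1 * W0)))
      = (2 ^ (n * (n - 1) / 2) /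
          (Real.pi ^ ((n : ℝ) / 2) * ∏ j ∈ Finset.Icc 1 (n - 1), (Nat.factorial j : ℝ))) *
        (∏ i : Fin n, ∏ j ∈ Finset.Ioi i, (b i - b j) ^ 2) *
        ∏ j : Fin n, Real.exp (-(b j) ^ 2) := by
    have := const_eval n hn b
    rw [hD0def, DA0_det, hs1def, hs2def, hGbdef, hW0def]
    rw [← this]
    ring
  rw [hfinal] at hlim
  apply hlim.congr'
  exact Filter.eventuallyEq_of_mem self_mem_nhdsWithin (fun q hq => (heq q hq).symm)

end
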